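/- arXiv:2312.11022 — 2 statements merged into one kernel-verified Lean document; each statement's English description precedes it below -/
import Mathlib

section
/- Let G, H : ℝⁿ → ℝᵐ be differentiable at a point w feasible for an MPCC. Then the tangent cone of the MPCC feasible set at w is contained in the MPCC-linearized feasible cone F^MPCC at w, i.e. every tangent direction d satisfies: ∇gᵢ(w)ᵀd = 0 for equality constraints, ∇hᵢ(w)ᵀd ≥ 0 for active inequalities, ∇Gᵢ(w)ᵀd = 0 for i with Gᵢ(w)=0 < Hᵢ(w), ∇Hᵢ(w)ᵀd = 0 for i with Hᵢ(w)=0 < Gᵢ(w), and 0 ≤ ∇Gᵢ(w)ᵀd ⊥ ∇Hᵢ(w)ᵀd ≥ 0 for biactive i. -/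
open Filter Topology Asymptotics

lemma seq_deriv_lim {E : Type*} [NormedAddCommGroup E] [NormedSpace ℝ E]
    (f : E → ℝ) (w d : E) (hf : DifferentiableAt ℝ f w)
    (wk : ℕ → E) (tk : ℕ → ℝ)
    (hwk : Tendsto wk atTop (𝓝 w))
    (hlim : Tendsto (fun k => (tk k)⁻¹ • (wk k - w)) atTop (𝓝 d)) :
    Tendsto (fun k => (tk k)⁻¹ * (f (wk k) - f w)) atTop (𝓝 (fderiv ℝ f w d)) := by
  set f' := fderiv ℝ f w
  have hr : (fun k => f (wk k) - f w - f' (wk k - w)) =o[atTop] (fun k => wk k - w) :=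
    (hf.hasFDerivAt.isLittleO).comp_tendsto hwk
  have hr2 : (fun k => (tk k)⁻¹ * (f (wk k) - f w - f' (wk k - w))) =o[atTop]
      (fun k => (tk k)⁻¹ • (wk k - w)) := by
    rw [isLittleO_iff] at hr ⊢
    intro c hc
    filter_upwards [hr hc] with k hk
    rw [Real.norm_eq_abs, abs_mul, norm_smul, Real.norm_eq_abs, ← mul_assoc,
      mul_comm c |(tk k)⁻¹|, mul_assoc]
    exact mul_le_mul_of_nonneg_left (by rwa [Real.norm_eq_abs] at hk) (abs_nonneg _)
  have h0 : Tendsto (fun k => (tk k)⁻¹ * (f (wk k) - f w - f' (wk k - w))) atTop (𝓝 0) := by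
    have : (fun k => (tk k)⁻¹ * (f (wk k) - f w - f' (wk k - w))) =o[atTop]
        (fun _ : ℕ => (1 : ℝ)) := hr2.trans_isBigO (hlim.isBigO_one ℝ)
    exact (isLittleO_one_iff ℝ).mp this
  have h1 : Tendsto (fun k => f' ((tk k)⁻¹ • (wk k - w))) atTop (𝓝 (f' d)) :=
    (f'.continuous.tendsto d).comp hlim
  have := h0.add h1
  rw [zero_add] at this
  refine this.congr fun k => ?_
  rw [map_smul, smul_eq_mul]
  ring

def tangentCone' {E : Type*} [NormedAddCommGroup E] [NormedSpace ℝ E]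
    (Ω : Set E) (w : E) : Set E :=
  {d | ∃ (wk : ℕ → E) (tk : ℕ → ℝ),
    (∀ k, wk k ∈ Ω) ∧ (∀ k, 0 < tk k) ∧
    Tendsto wk atTop (𝓝 w) ∧ Tendsto tk atTop (𝓝 0) ∧
    Tendsto (fun k => (tk k)⁻¹ • (wk k - w)) atTop (𝓝 d)}

/-- The tangent cone of the MPCC feasible set is contained in the MPCC-linearized
feasible cone. -/
theorem tangentCone_subset_MPCC_linearized_cone
    {n ng nh m : ℕ}
    (g : Fin ng → EuclideanSpace ℝ (Fin n) → ℝ)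
    (h : Fin nh → EuclideanSpace ℝ (Fin n) → ℝ)
    (G H : Fin m → EuclideanSpace ℝ (Fin n) → ℝ)
    (w : EuclideanSpace ℝ (Fin n))
    (Ω : Set (EuclideanSpace ℝ (Fin n)))
    (hΩ : Ω = {v | (∀ i, g i v = 0) ∧ (∀ i, 0 ≤ h i v) ∧
        (∀ i, 0 ≤ G i v) ∧ (∀ i, 0 ≤ H i v) ∧ (∀ i, G i v * H i v ≤ 0)})
    (hwΩ : w ∈ Ω)
    (hg : ∀ i, DifferentiableAt ℝ (g i) w)
    (hh : ∀ i, DifferentiableAt ℝ (h i) w)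
    (hG : ∀ i, DifferentiableAt ℝ (G i) w)
    (hH : ∀ i, DifferentiableAt ℝ (H i) w)
    (d : EuclideanSpace ℝ (Fin n)) (hd : d ∈ tangentCone' Ω w) :
    (∀ i, fderiv ℝ (g i) w d = 0) ∧
    (∀ i, h i w = 0 → 0 ≤ fderiv ℝ (h i) w d) ∧
    (∀ i, G i w = 0 → 0 < H i w → fderiv ℝ (G i) w d = 0) ∧
    (∀ i, H i w = 0 → 0 < G i w → fderiv ℝ (H i) w d = 0) ∧
    (∀ i, G i w = 0 → H i w = 0 →
      0 ≤ fderiv ℝ (G i) w d ∧ 0 ≤ fderiv ℝ (H i) w d ∧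
      fderiv ℝ (G i) w d * fderiv ℝ (H i) w d = 0) := by
  obtain ⟨wk, tk, hmem, htk, hwk, -, hlim⟩ := hd
  subst hΩ
  obtain ⟨hgw, hhw, hGw, hHw, hGHw⟩ := hwΩ
  -- feasibility of the sequence
  have hgk : ∀ i k, g i (wk k) = 0 := fun i k => (hmem k).1 i
  have hhk : ∀ i k, 0 ≤ h i (wk k) := fun i k => (hmem k).2.1 i
  have hGk : ∀ i k, 0 ≤ G i (wk k) := fun i k => (hmem k).2.2.1 i
  have hHk : ∀ i k, 0 ≤ H i (wk k) := fun i k => (hmem k).2.2.2.1 i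
  have hGHk : ∀ i k, G i (wk k) * H i (wk k) = 0 := fun i k =>
    le_antisymm ((hmem k).2.2.2.2 i) (mul_nonneg (hGk i k) (hHk i k))
  refine ⟨?_, ?_, ?_, ?_, ?_⟩
  · intro i
    have key := seq_deriv_lim (g i) w d (hg i) wk tk hwk hlim
    have : Tendsto (fun k => (tk k)⁻¹ * (g i (wk k) - g i w)) atTop (𝓝 0) := by
      simp only [hgk i, hgw i, sub_zero, mul_zero]
      exact tendsto_const_nhds
    exact tendsto_nhds_unique key this
  · intro i hi
    have key := seq_deriv_lim (h i) w d (hh i) wk tk hwk hlim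
    refine ge_of_tendsto' key fun k => ?_
    rw [hi, sub_zero]
    exact mul_nonneg (inv_nonneg.mpr (htk k).le) (hhk i k)
  · intro i hGi hHi
    have key := seq_deriv_lim (G i) w d (hG i) wk tk hwk hlim
    -- eventually H i (wk k) > 0, hence G i (wk k) = 0
    have hHcont : Tendsto (fun k => H i (wk k)) atTop (𝓝 (H i w)) :=
      ((hH i).continuousAt.tendsto).comp hwk
    have hev : ∀ᶠ k in atTop, (tk k)⁻¹ * (G i (wk k) - G i w) = 0 := by
      filter_upwards [hHcont.eventually (eventually_gt_nhds hHi)] with k hk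
      have hG0 : G i (wk k) = 0 := by
        rcases mul_eq_zero.mp (hGHk i k) with h' | h'
        · exact h'
        · exact absurd h' hk.ne'
      rw [hG0, hGi, sub_zero, mul_zero]
    have : Tendsto (fun k => (tk k)⁻¹ * (G i (wk k) - G i w)) atTop (𝓝 0) :=
      tendsto_const_nhds.congr' (by filter_upwards [hev] with k hk; rw [hk])
    exact tendsto_nhds_unique key this
  · intro i hHi hGi
    have key := seq_deriv_lim (H i) w d (hH i) wk tk hwk hlim
    have hGcont : Tendsto (fun k => G i (wk k)) atTop (𝓝 (G i w)) :=
      ((hG i).continuousAt.tendsto).comp hwk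
    have hev : ∀ᶠ k in atTop, (tk k)⁻¹ * (H i (wk k) - H i w) = 0 := by
      filter_upwards [hGcont.eventually (eventually_gt_nhds hGi)] with k hk
      have hH0 : H i (wk k) = 0 := by
        rcases mul_eq_zero.mp (hGHk i k) with h' | h'
        · exact absurd h' hk.ne'
        · exact h'
      rw [hH0, hHi, sub_zero, mul_zero]
    have : Tendsto (fun k => (tk k)⁻¹ * (H i (wk k) - H i w)) atTop (𝓝 0) :=
      tendsto_const_nhds.congr' (by filter_upwards [hev] with k hk; rw [hk])
    exact tendsto_nhds_unique key this
  · intro i hGi hHi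
    have keyG := seq_deriv_lim (G i) w d (hG i) wk tk hwk hlim
    have keyH := seq_deriv_lim (H i) w d (hH i) wk tk hwk hlim
    refine ⟨?_, ?_, ?_⟩
    · refine ge_of_tendsto' keyG fun k => ?_
      rw [hGi, sub_zero]
      exact mul_nonneg (inv_nonneg.mpr (htk k).le) (hGk i k)
    · refine ge_of_tendsto' keyH fun k => ?_
      rw [hHi, sub_zero]
      exact mul_nonneg (inv_nonneg.mpr (htk k).le) (hHk i k)
    · have hprod := keyG.mul keyH
      have : Tendsto (fun k => ((tk k)⁻¹ * (G i (wk k) - G i w)) *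
          ((tk k)⁻¹ * (H i (wk k) - H i w))) atTop (𝓝 0) := by
        have : ∀ k, ((tk k)⁻¹ * (G i (wk k) - G i w)) *
            ((tk k)⁻¹ * (H i (wk k) - H i w)) = 0 := by
          intro k
          rw [hGi, hHi, sub_zero, sub_zero]
          rcases mul_eq_zero.mp (hGHk i k) with h' | h' <;> rw [h'] <;> ring
        simp only [this]
        exact tendsto_const_nhds
      exact tendsto_nhds_unique hprod this
end

section
/- The Kanzow–Schwartz function φ_KS(y₁,y₂) defined by φ_KS(y₁,y₂) = y₁y₂ if y₁ + y₂ ≥ 0 and φ_KS(y₁,y₂) = -(y₁² + y₂²)/2 if y₁ + y₂ < 0 is continuously differentiable on ℝ², and φ_KS(a,b) = 0 if and only if a ≥ 0, b ≥ 0, ab = 0. -/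
/-- The Kanzow–Schwartz C-function. -/
noncomputable def phiKS (y₁ y₂ : ℝ) : ℝ :=
  if 0 ≤ y₁ + y₂ then y₁ * y₂ else -(y₁ ^ 2 + y₂ ^ 2) / 2

open Filter Topology

lemma hasDerivAt_maxsq (s : ℝ) :
    HasDerivAt (fun t : ℝ => max t 0 ^ 2) (2 * max s 0) s := by
  rcases lt_trichotomy s 0 with hs | hs | hs
  · have h : (fun t : ℝ => max t 0 ^ 2) =ᶠ[𝓝 s] fun _ => (0:ℝ) := by
      filter_upwards [eventually_lt_nhds hs] with t ht
      simp [max_eq_right ht.le]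
    rw [max_eq_right hs.le, mul_zero]
    exact (hasDerivAt_const s (0:ℝ)).congr_of_eventuallyEq h
  · subst hs
    rw [max_self, mul_zero]
    rw [hasDerivAt_iff_tendsto_slope]
    have hb : ∀ t : ℝ, t ≠ 0 → ‖slope (fun t : ℝ => max t 0 ^ 2) 0 t‖ ≤ |t| := by
      intro t ht
      rw [slope_def_field]
      simp only [max_self, ne_eq, zero_pow, sub_zero]
      rw [div_eq_mul_inv]
      have habs : |max t 0| ≤ |t| := by
        rw [abs_of_nonneg (le_max_right t 0)]
        exact max_le (le_abs_self t) (abs_nonneg t)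
      calc ‖(max t 0 ^ 2 - 0 ^ 2) * t⁻¹‖ = |max t 0| ^ 2 * |t|⁻¹ := by
            rw [norm_mul]; simp [abs_inv, abs_pow]
        _ ≤ |t| ^ 2 * |t|⁻¹ := by
            gcongr
        _ = |t| := by field_simp [ht]
    refine squeeze_zero_norm' (a := fun t : ℝ => |t|) ?_ ?_
    · exact eventually_nhdsWithin_of_forall fun t ht => hb t ht
    · exact (continuous_abs.tendsto' 0 0 (by simp)).mono_left nhdsWithin_le_nhds
  · have h : (fun t : ℝ => max t 0 ^ 2) =ᶠ[𝓝 s] fun t => t ^ 2 := by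
      filter_upwards [eventually_gt_nhds hs] with t ht
      simp [max_eq_left ht.le]
    rw [max_eq_left hs.le]
    exact ((hasDerivAt_pow 2 s).congr_of_eventuallyEq h).congr_deriv (by ring)

lemma contDiff_maxsq : ContDiff ℝ 1 (fun t : ℝ => max t 0 ^ 2) := by
  rw [contDiff_one_iff_deriv]
  constructor
  · exact fun s => (hasDerivAt_maxsq s).differentiableAt
  · have : deriv (fun t : ℝ => max t 0 ^ 2) = fun s => 2 * max s 0 := by
      ext s; exact (hasDerivAt_maxsq s).deriv
    rw [this]
    exact continuous_const.mul (continuous_id.max continuous_const)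

lemma phiKS_eq (y₁ y₂ : ℝ) :
    phiKS y₁ y₂ = -(y₁ ^ 2 + y₂ ^ 2) / 2 + max (y₁ + y₂) 0 ^ 2 / 2 := by
  unfold phiKS
  split_ifs with h
  · rw [max_eq_left h]; ring
  · rw [max_eq_right (le_of_lt (not_le.mp h))]; ring

/-- The Kanzow–Schwartz function is continuously differentiable on `ℝ²` and is an
NCP function: `φ_KS(a,b) = 0` iff `a ≥ 0`, `b ≥ 0`, `ab = 0`. -/
theorem kanzow_schwartz_properties :
    ContDiff ℝ 1 (fun p : ℝ × ℝ => phiKS p.1 p.2) ∧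
    (∀ a b : ℝ, phiKS a b = 0 ↔ (0 ≤ a ∧ 0 ≤ b ∧ a * b = 0)) := by
  constructor
  · have : (fun p : ℝ × ℝ => phiKS p.1 p.2) =
        fun p : ℝ × ℝ => -(p.1 ^ 2 + p.2 ^ 2) / 2 + max (p.1 + p.2) 0 ^ 2 / 2 := by
      ext p; exact phiKS_eq p.1 p.2
    rw [this]
    exact (((contDiff_fst.pow 2).add (contDiff_snd.pow 2)).neg.div_const 2).add
      ((contDiff_maxsq.comp (contDiff_fst.add contDiff_snd)).div_const 2)
  · intro a b
    constructor
    · intro h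
      unfold phiKS at h
      split_ifs at h with hs
      · rcases mul_eq_zero.mp h with ha | hb
        · subst ha; exact ⟨le_refl 0, by simpa using hs, by simp⟩
        · subst hb; exact ⟨by simpa using hs, le_refl 0, by simp⟩
      · have ha : a = 0 := by nlinarith [sq_nonneg a, sq_nonneg b]
        have hb : b = 0 := by nlinarith [sq_nonneg a, sq_nonneg b]
        exfalso; rw [ha, hb] at hs; simp at hs
    · rintro ⟨ha, hb, hab⟩
      unfold phiKS
      rw [if_pos (by linarith)]
      exact hab
end
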